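/- Fix a nonzero vector u ∈ ℝ³ and define ρ_u(x) := |x|^{-4} (|u| + (x·u)/|x|) for x ≠ 0. Then ρ_u(x) ≥ 0 for all x ≠ 0, ρ_u(x) = O(|x|^{-4}) as |x| → ∞, and the limit as R → ∞ of ∫_{B_R(0) \ B_1(0)} ρ_u(x) x dV does not exist; in fact each component ∫_{B_R(0) \ B_1(0)} ρ_u(x) x_i dV with u_i ≠ 0 diverges to infinity (with the sign of u_i) as R → ∞. -/

import Mathlib

noncomputable section
open MeasureTheory Filter Metric Real

abbrev E3 := EuclideanSpace ℝ (Fin 3)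

namespace Stmt3Aux

def A (R : ℝ) : Set E3 := ball (0:E3) R \ ball (0:E3) 1

lemma mem_A {R : ℝ} {x : E3} : x ∈ A R ↔ ‖x‖ < R ∧ 1 ≤ ‖x‖ := by
  simp [A, mem_ball_zero_iff, not_lt]

lemma measurableSet_A (R : ℝ) : MeasurableSet (A R) :=
  measurableSet_ball.diff measurableSet_ball

lemma volume_A_ne_top (R : ℝ) : volume (A R) ≠ ⊤ :=
  ((measure_mono Set.diff_subset).trans_lt measure_ball_lt_top).ne

lemma norm_pos_of_mem {R : ℝ} {x : E3} (hx : x ∈ A R) : 0 < ‖x‖ :=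
  lt_of_lt_of_le one_pos (mem_A.1 hx).2

/-- integrability of bounded measurable functions on A R -/
lemma integrableOn_A {𝕜 : Type*} [NormedAddCommGroup 𝕜] {f : E3 → 𝕜} {R M : ℝ}
    (hf : AEStronglyMeasurable f volume) (hb : ∀ x ∈ A R, ‖f x‖ ≤ M) :
    IntegrableOn f (A R) volume := by
  apply Measure.integrableOn_of_bounded (volume_A_ne_top R) hf
  exact (ae_restrict_iff' (measurableSet_A R)).2 (ae_of_all _ hb)

lemma meas_zpow (n : ℕ) : Measurable fun x : E3 => ‖x‖ ^ (-(n:ℤ)) := by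
  have : (fun x : E3 => ‖x‖ ^ (-(n:ℤ))) = fun x => (‖x‖ ^ n)⁻¹ := by
    ext x; rw [zpow_neg, zpow_natCast]
  rw [this]
  exact (measurable_norm.pow_const n).inv

lemma cont_apply (i : Fin 3) : Continuous fun x : E3 => x i :=
  (EuclideanSpace.proj i : E3 →L[ℝ] ℝ).continuous

end Stmt3Aux
namespace Stmt3Aux

lemma symm_integral (e : E3 ≃ₗᵢ[ℝ] E3) (f : E3 → ℝ) (R : ℝ) :
    ∫ x in A R, f (e x) = ∫ x in A R, f x := by
  have hA : e ⁻¹' A R = A R := by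
    ext x
    simp [mem_A, Set.mem_preimage, e.norm_map]
  calc ∫ x in A R, f (e x) = ∫ x in e ⁻¹' A R, f (e x) := by rw [hA]
    _ = ∫ x in A R, f x :=
      e.measurePreserving.setIntegral_preimage_emb
        e.toHomeomorph.measurableEmbedding f (A R)

/-- The reflection in coordinate j. -/
def flip (j : Fin 3) : E3 ≃ₗᵢ[ℝ] E3 :=
  LinearIsometryEquiv.piLpCongrRight 2
    (fun k => if k = j then LinearIsometryEquiv.neg ℝ else LinearIsometryEquiv.refl ℝ ℝ)

lemma flip_apply_same (j : Fin 3) (x : E3) : flip j x j = - x j := by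
  simp [flip]

lemma flip_apply_ne {j k : Fin 3} (h : k ≠ j) (x : E3) : flip j x k = x k := by
  simp [flip, h]

/-- The coordinate swap. -/
def swapIso (j k : Fin 3) : E3 ≃ₗᵢ[ℝ] E3 :=
  LinearIsometryEquiv.piLpCongrLeft 2 ℝ ℝ (Equiv.swap j k)

lemma swapIso_apply (j k m : Fin 3) (x : E3) : swapIso j k x m = x (Equiv.swap j k m) := by
  simp [swapIso, LinearIsometryEquiv.piLpCongrLeft_apply, Equiv.piCongrLeft'_apply]

end Stmt3Aux
namespace Stmt3Aux

def V (R : ℝ) : ℝ := ∫ x in A R, ‖x‖ ^ (-(3:ℕ):ℤ)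

lemma integrableOn_zpow (n : ℕ) (R : ℝ) :
    IntegrableOn (fun x : E3 => ‖x‖ ^ (-(n:ℤ))) (A R) volume := by
  apply integrableOn_A (M := 1) (meas_zpow n).aestronglyMeasurable
  intro x hx
  rw [Real.norm_eq_abs, abs_of_nonneg (zpow_nonneg (norm_nonneg x) _)]
  exact zpow_le_one_of_nonpos₀ (mem_A.1 hx).2 (by simp)

end Stmt3Aux
namespace Stmt3Aux

lemma abs_coord_le_norm (x : E3) (i : Fin 3) : |x i| ≤ ‖x‖ := by
  have h : |x i| = Real.sqrt ((x i)^2) := by rw [Real.sqrt_sq_eq_abs]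
  rw [h, EuclideanSpace.norm_eq]
  apply Real.sqrt_le_sqrt
  simp only [Real.norm_eq_abs, sq_abs]
  exact Finset.single_le_sum (f := fun j => x j ^ 2) (fun j _ => sq_nonneg _) (Finset.mem_univ i)

lemma integrableOn_P (R : ℝ) (i : Fin 3) :
    IntegrableOn (fun x : E3 => ‖x‖ ^ (-(4:ℕ):ℤ) * x i) (A R) volume := by
  apply integrableOn_A (M := 1)
    (((meas_zpow 4).mul (cont_apply i).measurable).aestronglyMeasurable)
  intro x hx
  have h1 : (1:ℝ) ≤ ‖x‖ := (mem_A.1 hx).2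
  have h0 : (0:ℝ) < ‖x‖ := norm_pos_of_mem hx
  simp only [Pi.mul_apply]
  rw [Real.norm_eq_abs, abs_mul, abs_of_nonneg (zpow_nonneg (norm_nonneg x) _)]
  calc ‖x‖ ^ (-(4:ℕ):ℤ) * |x i| ≤ ‖x‖ ^ (-(4:ℕ):ℤ) * ‖x‖ ^ (1:ℤ) := by
        apply mul_le_mul_of_nonneg_left _ (zpow_nonneg (norm_nonneg x) _)
        simpa using abs_coord_le_norm x i
    _ = ‖x‖ ^ (-(3:ℕ):ℤ) := by
        rw [← zpow_add₀ h0.ne']; norm_num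
    _ ≤ 1 := zpow_le_one_of_nonpos₀ h1 (by simp)

lemma integrableOn_Q (R : ℝ) (i k : Fin 3) :
    IntegrableOn (fun x : E3 => ‖x‖ ^ (-(5:ℕ):ℤ) * (x i * x k)) (A R) volume := by
  apply integrableOn_A (M := 1)
    (((meas_zpow 5).mul
      ((cont_apply i).measurable.mul (cont_apply k).measurable)).aestronglyMeasurable)
  intro x hx
  have h1 : (1:ℝ) ≤ ‖x‖ := (mem_A.1 hx).2
  have h0 : (0:ℝ) < ‖x‖ := norm_pos_of_mem hx
  simp only [Pi.mul_apply]
  rw [Real.norm_eq_abs, abs_mul, abs_of_nonneg (zpow_nonneg (norm_nonneg x) _), abs_mul]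
  calc ‖x‖ ^ (-(5:ℕ):ℤ) * (|x i| * |x k|) ≤ ‖x‖ ^ (-(5:ℕ):ℤ) * (‖x‖ * ‖x‖) := by
        apply mul_le_mul_of_nonneg_left _ (zpow_nonneg (norm_nonneg x) _)
        exact mul_le_mul (abs_coord_le_norm x i) (abs_coord_le_norm x k)
          (abs_nonneg _) (norm_nonneg _)
    _ = ‖x‖ ^ (-(3:ℕ):ℤ) := by
        rw [show ‖x‖ * ‖x‖ = ‖x‖ ^ (2:ℤ) from (zpow_two _).symm, ← zpow_add₀ h0.ne']
        norm_num
    _ ≤ 1 := zpow_le_one_of_nonpos₀ h1 (by simp)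

lemma P_eq_zero (R : ℝ) (i : Fin 3) :
    ∫ x in A R, ‖x‖ ^ (-(4:ℕ):ℤ) * x i = 0 := by
  have h := symm_integral (flip i) (fun x => ‖x‖ ^ (-(4:ℕ):ℤ) * x i) R
  have h2 : ∀ x : E3, ‖flip i x‖ ^ (-(4:ℕ):ℤ) * (flip i x) i
      = -(‖x‖ ^ (-(4:ℕ):ℤ) * x i) := by
    intro x
    rw [(flip i).norm_map, flip_apply_same]
    ring
  simp only [h2, integral_neg] at h
  linarith

lemma Q_offdiag (R : ℝ) {i k : Fin 3} (hik : i ≠ k) :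
    ∫ x in A R, ‖x‖ ^ (-(5:ℕ):ℤ) * (x i * x k) = 0 := by
  have h := symm_integral (flip i) (fun x => ‖x‖ ^ (-(5:ℕ):ℤ) * (x i * x k)) R
  have h2 : ∀ x : E3, ‖flip i x‖ ^ (-(5:ℕ):ℤ) * ((flip i x) i * (flip i x) k)
      = -(‖x‖ ^ (-(5:ℕ):ℤ) * (x i * x k)) := by
    intro x
    rw [(flip i).norm_map, flip_apply_same, flip_apply_ne hik.symm]
    ring
  simp only [h2, integral_neg] at h
  linarith

lemma Q_diag (R : ℝ) (i k : Fin 3) :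
    ∫ x in A R, ‖x‖ ^ (-(5:ℕ):ℤ) * (x i * x i)
      = ∫ x in A R, ‖x‖ ^ (-(5:ℕ):ℤ) * (x k * x k) := by
  have h := symm_integral (swapIso k i) (fun x => ‖x‖ ^ (-(5:ℕ):ℤ) * (x k * x k)) R
  have h2 : ∀ x : E3, ‖swapIso k i x‖ ^ (-(5:ℕ):ℤ) * ((swapIso k i x) k * (swapIso k i x) k)
      = ‖x‖ ^ (-(5:ℕ):ℤ) * (x i * x i) := by
    intro x
    rw [(swapIso k i).norm_map, swapIso_apply, Equiv.swap_apply_left]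
  simp only [h2] at h
  exact h

lemma sum_Q_diag (R : ℝ) :
    ∑ k : Fin 3, ∫ x in A R, ‖x‖ ^ (-(5:ℕ):ℤ) * (x k * x k) = V R := by
  rw [← integral_finset_sum _ (fun k _ => integrableOn_Q R k k)]
  apply setIntegral_congr_fun (measurableSet_A R)
  intro x hx
  have h0 : (0:ℝ) < ‖x‖ := norm_pos_of_mem hx
  have hinner : (inner ℝ x x : ℝ) = ∑ k : Fin 3, x k * x k := rfl
  have hs : ∑ k : Fin 3, x k * x k = ‖x‖ * ‖x‖ := by
    rw [← hinner, real_inner_self_eq_norm_mul_norm]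
  show ∑ k : Fin 3, ‖x‖ ^ (-(5:ℕ):ℤ) * (x k * x k) = ‖x‖ ^ (-(3:ℕ):ℤ)
  rw [← Finset.mul_sum, hs, show ‖x‖ * ‖x‖ = ‖x‖ ^ (2:ℤ) from (zpow_two _).symm,
    ← zpow_add₀ h0.ne']
  norm_num

lemma Q_diag_eq (R : ℝ) (i : Fin 3) :
    ∫ x in A R, ‖x‖ ^ (-(5:ℕ):ℤ) * (x i * x i) = V R / 3 := by
  have h := sum_Q_diag R
  have h2 : ∀ k : Fin 3, ∫ x in A R, ‖x‖ ^ (-(5:ℕ):ℤ) * (x k * x k)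
      = ∫ x in A R, ‖x‖ ^ (-(5:ℕ):ℤ) * (x i * x i) := fun k => Q_diag R k i
  rw [Finset.sum_congr rfl (fun k _ => h2 k), Finset.sum_const] at h
  simp only [Finset.card_univ, Fintype.card_fin, nsmul_eq_mul] at h
  push_cast at h
  linarith

end Stmt3Aux
namespace Stmt3Aux

lemma key (u : E3) (R : ℝ) (i : Fin 3) :
    ∫ x in A R, ‖x‖ ^ (-4:ℤ) * (‖u‖ + (inner ℝ x u : ℝ) / ‖x‖) * x i = V R / 3 * u i := by
  have hcongr : ∫ x in A R, ‖x‖ ^ (-4:ℤ) * (‖u‖ + (inner ℝ x u : ℝ) / ‖x‖) * x i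
      = ∫ x in A R, (‖u‖ * (‖x‖ ^ (-(4:ℕ):ℤ) * x i)
          + ∑ k : Fin 3, u k * (‖x‖ ^ (-(5:ℕ):ℤ) * (x i * x k))) := by
    apply setIntegral_congr_fun (measurableSet_A R)
    intro x hx
    have h0 : (0:ℝ) < ‖x‖ := norm_pos_of_mem hx
    have hne : ‖x‖ ≠ 0 := h0.ne'
    have hinner : (inner ℝ x u : ℝ) = ∑ k : Fin 3, x k * u k := by
      simp [PiLp.inner_apply, mul_comm]
    show ‖x‖ ^ (-4:ℤ) * (‖u‖ + (inner ℝ x u : ℝ) / ‖x‖) * x i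
        = ‖u‖ * (‖x‖ ^ (-(4:ℕ):ℤ) * x i)
          + ∑ k : Fin 3, u k * (‖x‖ ^ (-(5:ℕ):ℤ) * (x i * x k))
    have hsum : ∑ k : Fin 3, u k * (‖x‖ ^ (-(5:ℕ):ℤ) * (x i * x k))
        = (∑ k : Fin 3, x k * u k) * (‖x‖ ^ (-(5:ℕ):ℤ) * x i) := by
      rw [Finset.sum_mul]
      exact Finset.sum_congr rfl fun k _ => by ring
    rw [hinner, hsum]
    have h5 : ‖x‖ ^ (-(5:ℕ):ℤ) = ‖x‖ ^ (-4:ℤ) / ‖x‖ := by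
      rw [eq_div_iff hne, ← zpow_add_one₀ hne]; norm_num
    have h44 : ‖x‖ ^ (-(4:ℕ):ℤ) = ‖x‖ ^ (-4:ℤ) := by norm_num
    rw [h5, h44]
    field_simp
  rw [hcongr, integral_add ((integrableOn_P R i).const_mul _)
      (integrable_finset_sum _ (fun k _ => (integrableOn_Q R i k).const_mul _)),
    integral_const_mul, P_eq_zero,
    integral_finset_sum _ (fun k _ => (integrableOn_Q R i k).const_mul _)]
  simp only [integral_const_mul]
  rw [Finset.sum_eq_single_of_mem i (Finset.mem_univ i)
    (fun k _ hk => by rw [Q_offdiag R (Ne.symm hk), mul_zero])]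
  rw [Q_diag_eq R i]
  ring

end Stmt3Aux
namespace Stmt3Aux

def v : ℝ := (volume (ball (0:E3) 1)).toReal

lemma v_pos : 0 < v :=
  ENNReal.toReal_pos (measure_ball_pos volume 0 one_pos).ne' measure_ball_lt_top.ne

lemma V_mono : Monotone V := by
  intro a b hab
  apply setIntegral_mono_set (integrableOn_zpow 3 b)
    (ae_of_all _ fun x => zpow_nonneg (norm_nonneg x) _)
  exact HasSubset.Subset.eventuallyLE (Set.diff_subset_diff_left (ball_subset_ball hab))

lemma volume_ball_toReal (ρ : ℝ) (hρ : 0 ≤ ρ) :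
    (volume (ball (0:E3) ρ)).toReal = ρ ^ 3 * v := by
  rw [Measure.addHaar_ball volume (0:E3) hρ, ENNReal.toReal_mul,
    ENNReal.toReal_ofReal (pow_nonneg hρ _), finrank_euclideanSpace_fin, v]

lemma shell (n : ℕ) : V (2^n) + 7/8 * v ≤ V (2^(n+1)) := by
  set r : ℝ := 2^n with hrdef
  have hr1 : (1:ℝ) ≤ r := one_le_pow₀ (by norm_num)
  have hr : (0:ℝ) < r := lt_of_lt_of_le one_pos hr1
  set b : ℝ := 2^(n+1) with hbdef
  have hb : b = 2 * r := by rw [hbdef, hrdef, pow_succ]; ring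
  have hrb : r ≤ b := by rw [hb]; linarith
  set S : Set E3 := ball (0:E3) b \ ball (0:E3) r with hSdef
  have hSmeas : MeasurableSet S := measurableSet_ball.diff measurableSet_ball
  have hSsub : S ⊆ A b := Set.diff_subset_diff_right (ball_subset_ball hr1)
  have hset : A b = A r ∪ S := by
    ext x
    simp only [A, hSdef, Set.mem_diff, mem_ball_zero_iff, Set.mem_union, not_lt]
    constructor
    · rintro ⟨h1, h2⟩
      by_cases hc : ‖x‖ < r
      · exact Or.inl ⟨hc, h2⟩
      · exact Or.inr ⟨h1, not_lt.1 hc⟩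
    · rintro (⟨h1, h2⟩ | ⟨h1, h2⟩)
      · exact ⟨lt_of_lt_of_le h1 hrb, h2⟩
      · exact ⟨h1, le_trans hr1 h2⟩
  have hdisj : Disjoint (A r) S := by
    rw [Set.disjoint_left]
    rintro x ⟨hx1, -⟩ ⟨-, hx2⟩
    exact hx2 hx1
  have hsplit : V b = V r + ∫ x in S, ‖x‖ ^ (-(3:ℕ):ℤ) := by
    rw [V, hset]
    exact setIntegral_union hdisj hSmeas (integrableOn_zpow 3 r)
      ((integrableOn_zpow 3 b).mono_set hSsub)
  have hSvol : (volume S).toReal = b ^ 3 * v - r ^ 3 * v := by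
    rw [hSdef, measure_diff (ball_subset_ball hrb) measurableSet_ball.nullMeasurableSet
      measure_ball_lt_top.ne,
      ENNReal.toReal_sub_of_le (measure_mono (ball_subset_ball hrb)) measure_ball_lt_top.ne,
      volume_ball_toReal b (by linarith), volume_ball_toReal r hr.le]
  have hlow : b ^ (-(3:ℕ):ℤ) * (volume S).toReal ≤ ∫ x in S, ‖x‖ ^ (-(3:ℕ):ℤ) := by
    apply setIntegral_ge_of_const_le_real hSmeas
      (((measure_mono (Set.diff_subset)).trans_lt measure_ball_lt_top).ne)
    · intro x hx
      have hx1 : ‖x‖ < b := by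
        have := hx.1; rwa [mem_ball_zero_iff] at this
      have hx2 : r ≤ ‖x‖ := by
        have := hx.2; rw [mem_ball_zero_iff] at this; exact not_lt.1 this
      have hxpos : 0 < ‖x‖ := lt_of_lt_of_le hr hx2
      rw [zpow_neg, zpow_neg, zpow_natCast, zpow_natCast]
      exact inv_anti₀ (pow_pos hxpos 3) (pow_le_pow_left₀ hxpos.le hx1.le 3)
    · exact (integrableOn_zpow 3 b).mono_set hSsub
  have harith : b ^ (-(3:ℕ):ℤ) * (volume S).toReal = 7/8 * v := by
    rw [hSvol, zpow_neg, zpow_natCast, hb]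
    field_simp
    ring
  rw [hsplit]
  rw [harith] at hlow
  linarith

lemma V_lower (n : ℕ) : 7/8 * v * n ≤ V (2^n) := by
  induction n with
  | zero =>
      simp only [pow_zero, Nat.cast_zero, mul_zero]
      rw [V, A, Set.diff_self, setIntegral_empty]
  | succ n ih =>
      have := shell n
      push_cast
      push_cast at ih
      linarith

lemma V_tendsto : Tendsto V atTop atTop := by
  apply tendsto_atTop_atTop_of_monotone V_mono
  intro c
  obtain ⟨n, hn⟩ := exists_nat_ge (c / (7/8 * v))
  refine ⟨2^n, ?_⟩
  have h1 : c ≤ 7/8 * v * n := by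
    rw [div_le_iff₀ (mul_pos (by norm_num) v_pos)] at hn
    linarith [hn]
  exact h1.trans (V_lower n)

end Stmt3Aux
namespace Stmt3Aux

variable (u : E3)

def rho (x : E3) : ℝ := ‖x‖ ^ (-4:ℤ) * (‖u‖ + (inner ℝ x u : ℝ) / ‖x‖)

lemma meas_rho : Measurable (rho u) := by
  have h1 : Measurable fun x : E3 => ‖x‖ ^ (-4:ℤ) := by
    have : (fun x : E3 => ‖x‖ ^ (-4:ℤ)) = fun x => (‖x‖ ^ 4)⁻¹ := by
      ext x; rw [zpow_neg]; norm_cast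
    rw [this]; exact (measurable_norm.pow_const 4).inv
  exact h1.mul (measurable_const.add
    (((continuous_id.inner continuous_const).measurable).div measurable_norm))

lemma abs_factor_le {x : E3} (hx : x ≠ 0) : |‖u‖ + (inner ℝ x u : ℝ) / ‖x‖| ≤ 2 * ‖u‖ := by
  have hx0 : (0:ℝ) < ‖x‖ := norm_pos_iff.2 hx
  have h : |(inner ℝ x u : ℝ)| ≤ ‖x‖ * ‖u‖ := abs_real_inner_le_norm x u
  have h2 : |(inner ℝ x u : ℝ) / ‖x‖| ≤ ‖u‖ := by
    rw [abs_div, abs_of_pos hx0, div_le_iff₀ hx0]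
    rw [mul_comm] at h; exact h
  have h3 := abs_le.1 h2
  rw [abs_le]
  constructor <;> nlinarith [norm_nonneg u]

lemma rho_nonneg {x : E3} (hx : x ≠ 0) : 0 ≤ rho u x := by
  have hx0 : (0:ℝ) < ‖x‖ := norm_pos_iff.2 hx
  apply mul_nonneg (zpow_nonneg (norm_nonneg x) _)
  have h : |(inner ℝ x u : ℝ)| ≤ ‖x‖ * ‖u‖ := abs_real_inner_le_norm x u
  have h2 : -‖u‖ ≤ (inner ℝ x u : ℝ) / ‖x‖ := by
    rw [le_div_iff₀ hx0]
    nlinarith [neg_abs_le (inner ℝ x u : ℝ)]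
  linarith

lemma integrableOn_rho_smul (R : ℝ) :
    IntegrableOn (fun x : E3 => rho u x • x) (A R) volume := by
  apply integrableOn_A (M := 2 * ‖u‖)
    (((meas_rho u).aestronglyMeasurable).smul (measurable_id.aestronglyMeasurable))
  intro x hx
  have h1 : (1:ℝ) ≤ ‖x‖ := (mem_A.1 hx).2
  have h0 : (0:ℝ) < ‖x‖ := norm_pos_of_mem hx
  simp only [Pi.smul_apply', id_eq]
  rw [norm_smul, Real.norm_eq_abs, rho, abs_mul, abs_of_nonneg (zpow_nonneg (norm_nonneg x) _)]
  calc ‖x‖ ^ (-4:ℤ) * |‖u‖ + (inner ℝ x u : ℝ) / ‖x‖| * ‖x‖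
      ≤ ‖x‖ ^ (-4:ℤ) * (2 * ‖u‖) * ‖x‖ := by
        apply mul_le_mul_of_nonneg_right _ (norm_nonneg x)
        exact mul_le_mul_of_nonneg_left (abs_factor_le u (norm_pos_iff.1 h0))
          (zpow_nonneg (norm_nonneg x) _)
    _ = ‖x‖ ^ (-4+1:ℤ) * (2 * ‖u‖) := by
        rw [mul_right_comm, ← zpow_add_one₀ h0.ne']
    _ ≤ 1 * (2 * ‖u‖) := by
        apply mul_le_mul_of_nonneg_right (zpow_le_one_of_nonpos₀ h1 (by norm_num))
        positivity
    _ = 2 * ‖u‖ := one_mul _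

lemma proj_integral (R : ℝ) (i : Fin 3) :
    (∫ x in A R, rho u x • x) i = V R / 3 * u i := by
  have h := (EuclideanSpace.proj i : E3 →L[ℝ] ℝ).integral_comp_comm (integrableOn_rho_smul u R)
  have h2 : (EuclideanSpace.proj i : E3 →L[ℝ] ℝ) (∫ x in A R, rho u x • x)
      = ∫ x in A R, rho u x * x i := by
    rw [← h]
    refine integral_congr_ae (ae_of_all _ fun x => ?_)
    simp [smul_eq_mul]
  have h3 : (EuclideanSpace.proj i : E3 →L[ℝ] ℝ) (∫ x in A R, rho u x • x)
      = (∫ x in A R, rho u x • x) i := rfl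
  rw [← h3, h2]
  exact key u R i

end Stmt3Aux
open Stmt3Aux in
theorem stmt_3 (u : E3) (hu : u ≠ 0) :
    (∀ x : E3, x ≠ 0 → 0 ≤ ‖x‖ ^ (-4:ℤ) * (‖u‖ + (inner ℝ x u : ℝ) / ‖x‖)) ∧
    (∃ C : ℝ, 0 < C ∧ ∀ x : E3, 1 ≤ ‖x‖ →
      ‖x‖ ^ (-4:ℤ) * (‖u‖ + (inner ℝ x u : ℝ) / ‖x‖) ≤ C * ‖x‖ ^ (-4:ℤ)) ∧
    (¬ ∃ c : E3, Tendsto (fun R : ℝ =>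
        ∫ x in ball (0:E3) R \ ball (0:E3) 1,
          (‖x‖ ^ (-4:ℤ) * (‖u‖ + (inner ℝ x u : ℝ) / ‖x‖)) • x) atTop (nhds c)) ∧
    (∀ i : Fin 3, 0 < u i → Tendsto (fun R : ℝ =>
        ∫ x in ball (0:E3) R \ ball (0:E3) 1,
          ‖x‖ ^ (-4:ℤ) * (‖u‖ + (inner ℝ x u : ℝ) / ‖x‖) * x i) atTop atTop) ∧
    (∀ i : Fin 3, u i < 0 → Tendsto (fun R : ℝ =>
        ∫ x in ball (0:E3) R \ ball (0:E3) 1,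
          ‖x‖ ^ (-4:ℤ) * (‖u‖ + (inner ℝ x u : ℝ) / ‖x‖) * x i) atTop atBot) := by
  have hukey : ∀ i : Fin 3, (fun R : ℝ =>
      ∫ x in ball (0:E3) R \ ball (0:E3) 1,
        ‖x‖ ^ (-4:ℤ) * (‖u‖ + (inner ℝ x u : ℝ) / ‖x‖) * x i)
      = fun R => V R * (u i / 3) := fun i =>
    funext fun R => (key u R i).trans (by ring)
  refine ⟨fun x hx => rho_nonneg u hx, ?_, ?_, ?_, ?_⟩
  · refine ⟨2 * ‖u‖, mul_pos two_pos (norm_pos_iff.2 hu), fun x hx => ?_⟩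
    have hx0 : (0:ℝ) < ‖x‖ := lt_of_lt_of_le one_pos hx
    rw [mul_comm (2 * ‖u‖)]
    apply mul_le_mul_of_nonneg_left _ (zpow_nonneg (norm_nonneg x) _)
    have h := abs_factor_le u (norm_pos_iff.1 hx0)
    linarith [le_abs_self (‖u‖ + (inner ℝ x u : ℝ) / ‖x‖)]
  · rintro ⟨c, hc⟩
    obtain ⟨i, hi⟩ : ∃ i, u i ≠ 0 := by
      by_contra h; push_neg at h; apply hu; ext i; simpa using h i
    have hcont : Continuous fun y : E3 => y i := cont_apply i
    have hproj : Tendsto (fun R : ℝ =>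
        (∫ x in ball (0:E3) R \ ball (0:E3) 1,
          (‖x‖ ^ (-4:ℤ) * (‖u‖ + (inner ℝ x u : ℝ) / ‖x‖)) • x) i) atTop (nhds (c i)) :=
      (hcont.tendsto c).comp hc
    have heq : (fun R : ℝ =>
        (∫ x in ball (0:E3) R \ ball (0:E3) 1,
          (‖x‖ ^ (-4:ℤ) * (‖u‖ + (inner ℝ x u : ℝ) / ‖x‖)) • x) i)
        = fun R => V R * (u i / 3) :=
      funext fun R => (proj_integral u R i).trans (by ring)
    rw [heq] at hproj
    rcases lt_or_gt_of_ne hi with hneg | hpos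
    · exact not_tendsto_nhds_of_tendsto_atBot
        ((tendsto_mul_const_atBot_of_neg (by linarith)).2 V_tendsto) _ hproj
    · exact not_tendsto_nhds_of_tendsto_atTop
        (V_tendsto.atTop_mul_const (by linarith)) _ hproj
  · intro i hi
    rw [hukey i]
    exact V_tendsto.atTop_mul_const (by linarith)
  · intro i hi
    rw [hukey i]
    exact (tendsto_mul_const_atBot_of_neg (by linarith)).2 V_tendsto
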